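/- arXiv:2111.00819 — 2 statements merged into one kernel-verified Lean document; each statement's English description precedes it below -/
import Mathlib

section
/- Give S = K[x,y] the standard grading deg(x) = deg(y) = 1, let h : ℤ_{≥0} → ℤ_{≥0} be the Hilbert function of some monomial ideal of S of finite colength, and let M⁻ and M⁺ be the lex-least and lex-most monomial ideals with Hilbert function h. Suppose I ⊆ S is a homogeneous ideal with dim_K (S/I)_d = h(d) for all d ≥ 0 such that for every d ≥ 0, every nonzero homogeneous polynomial in I of degree d has at least h(d) + 1 monomials in its support (i.e. every degree-d matroid of the tropicalization of I is uniform). Then in_≺(I) = M⁻ and in_{≺ᵒᵖᵖ}(I) = M⁺, where ≺ is the lexicographic order with x ≺ y and ≺ᵒᵖᵖ the lexicographic order with y ≺ x. -/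
/-!
Combinatorial framework for monomial ideals in `K[x,y]`, graded by
`deg x = a`, `deg y = b`.  A monomial `x^α y^β` is represented by the
pair `(α, β) : ℤ × ℤ`; it lies in `S = K[x,y]` when both entries are
nonnegative.
-/

namespace MonId

/-- A (Laurent) monomial `x^α y^β`, represented by its exponent vector. -/
abbrev Mon : Type := ℤ × ℤ

/-- `p` is a genuine monomial of `S = K[x,y]` (nonnegative exponents). -/
def inS (p : Mon) : Prop := 0 ≤ p.1 ∧ 0 ≤ p.2

/-- `M` is (the set of monomials of) a monomial ideal of `S` of finite
colength: it consists of monomials of `S`, is closed under multiplication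
by `x` and by `y`, and its complement in the monomials of `S` is finite. -/
def IsMonIdeal (M : Set Mon) : Prop :=
  (∀ p ∈ M, inS p) ∧
  (∀ p ∈ M, (p.1 + 1, p.2) ∈ M ∧ (p.1, p.2 + 1) ∈ M) ∧
  {p : Mon | inS p ∧ p ∉ M}.Finite

/-- `p` is a minimal monomial generator of the monomial ideal `M`. -/
def IsMinGen (M : Set Mon) (p : Mon) : Prop :=
  p ∈ M ∧ (p.1 - 1, p.2) ∉ M ∧ (p.1, p.2 - 1) ∉ M

/-- `m 0, m 1, …, m e` is the list of minimal generators of `M`, in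
increasing lexicographic order `≺` with `x ≺ y` (equivalently, with
strictly increasing `y`-exponents). -/
def IsGenSeq (M : Set Mon) (e : ℕ) (m : ℕ → Mon) : Prop :=
  (∀ k ≤ e, IsMinGen M (m k)) ∧
  (∀ k, k < e → (m k).2 < (m (k + 1)).2) ∧
  (∀ p, IsMinGen M p → ∃ k ≤ e, m k = p)

/-- Multiplication of the monomial `p` by `r^ℓ`, where `r = x^b y^{-a}`. -/
def rpow (a b ℓ : ℤ) (p : Mon) : Mon := (p.1 + b * ℓ, p.2 - a * ℓ)

/-- `w m i` is `w_i = lcm(m_{i-1}, m_i)` (componentwise max of exponents). -/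
def w (m : ℕ → Mon) (i : ℕ) : Mon :=
  (max (m (i - 1)).1 (m i).1, max (m (i - 1)).2 (m i).2)

/-- The set `T⁺(M)` of positive significant arrows `(i, ℓ)`:
`1 ≤ i ≤ e`, `ℓ ≥ 1`, `m_i r^ℓ ∈ S ∖ M` and `w_i r^ℓ ∈ M`. -/
def Tplus (a b : ℤ) (M : Set Mon) (e : ℕ) (m : ℕ → Mon) : Set (ℕ × ℤ) :=
  {q | 1 ≤ q.1 ∧ q.1 ≤ e ∧ 1 ≤ q.2 ∧ inS (rpow a b q.2 (m q.1)) ∧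
    rpow a b q.2 (m q.1) ∉ M ∧ rpow a b q.2 (w m q.1) ∈ M}

/-- The set `T⁻(M)` of negative significant arrows `(i, ℓ)`:
`0 ≤ i ≤ e - 1`, `ℓ ≤ -1`, `m_i r^ℓ ∈ S ∖ M` and `w_{i+1} r^ℓ ∈ M`. -/
def Tminus (a b : ℤ) (M : Set Mon) (e : ℕ) (m : ℕ → Mon) : Set (ℕ × ℤ) :=
  {q | q.1 < e ∧ q.2 ≤ -1 ∧ inS (rpow a b q.2 (m q.1)) ∧
    rpow a b q.2 (m q.1) ∉ M ∧ rpow a b q.2 (w m (q.1 + 1)) ∈ M}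

/-- `j⁺(p) = max {i : m_i divides p}`. -/
def jplus (e : ℕ) (m : ℕ → Mon) (p : Mon) : ℕ :=
  Nat.findGreatest (fun i => (m i).1 ≤ p.1 ∧ (m i).2 ≤ p.2) e

/-- `j⁻(p) = min {i : m_i divides p}`. -/
noncomputable def jminus (e : ℕ) (m : ℕ → Mon) (p : Mon) : ℕ :=
  sInf {i | i ≤ e ∧ (m i).1 ≤ p.1 ∧ (m i).2 ≤ p.2}

/-- `IsPath a b M e m i P`: `P` is a path from the generator `m_i`, i.e. a
finite sequence of positive significant arrows whose first arrow `(i₁, ℓ₁)`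
has `i₁ ≤ i`, and whose tail is a path from `m_{j⁺(w_{i₁} r^{ℓ₁})}`.
The empty sequence is a path from every generator. -/
def IsPath (a b : ℤ) (M : Set Mon) (e : ℕ) (m : ℕ → Mon) : ℕ → List (ℕ × ℤ) → Prop
  | _, [] => True
  | i, q :: rest => q ∈ Tplus a b M e m ∧ q.1 ≤ i ∧
      IsPath a b M e m (jplus e m (rpow a b q.2 (w m q.1))) rest

/-- The length `l(P) = ℓ₁ + ⋯ + ℓ_s` of a path. -/
def llen (P : List (ℕ × ℤ)) : ℤ := (P.map Prod.snd).sum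

/-- `lm j` is the largest `ℓ` with `(j, ℓ) ∈ T⁺(M)`, and is `0` when no
such arrow exists. -/
def IsLmax (Tp : Set (ℕ × ℤ)) (lm : ℕ → ℤ) : Prop :=
  ∀ j : ℕ, (∀ ℓ : ℤ, (j, ℓ) ∈ Tp → ℓ ≤ lm j) ∧
    ((∃ ℓ : ℤ, (j, ℓ) ∈ Tp) → (j, lm j) ∈ Tp) ∧
    ((¬ ∃ ℓ : ℤ, (j, ℓ) ∈ Tp) → lm j = 0)

/-- `IsZSeq a b e m lm k L`: `L` is the sequence `(z_1, z_2, …)` of arrows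
produced by the greedy procedure started at index `k`: while `i ≥ 1`, if
`ℓ_i > 0` record the arrow `(i, ℓ_i)` and jump to `j⁺(w_i r^{ℓ_i})`,
otherwise decrease `i` by one; stop when `i ≤ 0`. -/
inductive IsZSeq (a b : ℤ) (e : ℕ) (m : ℕ → Mon) (lm : ℕ → ℤ) : ℕ → List (ℕ × ℤ) → Prop where
  | zero : IsZSeq a b e m lm 0 []
  | skip {i : ℕ} {L : List (ℕ × ℤ)} : 1 ≤ i → lm i ≤ 0 →
      IsZSeq a b e m lm (i - 1) L → IsZSeq a b e m lm i L
  | step {i : ℕ} {L : List (ℕ × ℤ)} : 1 ≤ i → 0 < lm i →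
      IsZSeq a b e m lm (jplus e m (rpow a b (lm i) (w m i))) L →
      IsZSeq a b e m lm i ((i, lm i) :: L)

/-- `D` is a direct path from `m_k`: a path which is either a nonempty
initial segment `(z_1, …, z_s)` of the greedy sequence from `k`, or
`(z_1, …, z_s, (i', ℓ'))` where `i'` is the index of `z_{s+1}` and
`1 ≤ ℓ' < ℓ_{i'}`. -/
def IsDirectPath (a b : ℤ) (M : Set Mon) (e : ℕ) (m : ℕ → Mon) (lm : ℕ → ℤ)
    (k : ℕ) (D : List (ℕ × ℤ)) : Prop :=
  IsPath a b M e m k D ∧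
  ∃ L, IsZSeq a b e m lm k L ∧
    ((∃ s : ℕ, 0 < s ∧ s ≤ L.length ∧ D = L.take s) ∨
     (∃ (s : ℕ) (z : ℕ × ℤ) (ℓ' : ℤ), L[s]? = some z ∧ 1 ≤ ℓ' ∧ ℓ' < z.2 ∧
       D = L.take s ++ [(z.1, ℓ')]))

/-- The monomial `c_P = c_{i₁}^{ℓ₁} ⋯ c_{i_s}^{ℓ_s}` associated to a path,
as an element of the polynomial ring with variables `c_i^ℓ` (indexed by
pairs `(i, ℓ)`). -/
noncomputable def cP (K : Type*) [CommSemiring K] (P : List (ℕ × ℤ)) : MvPolynomial (ℕ × ℤ) K :=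
  (P.map MvPolynomial.X).prod

end MonId

namespace MonId

/-- The monomial `x^α y^β` of `K[x,y] = K[X 0, X 1]` associated to
`p = (α, β)`. -/
noncomputable def monOf (K : Type*) [CommSemiring K] (p : Mon) :
    MvPolynomial (Fin 2) K :=
  MvPolynomial.X 0 ^ p.1.toNat * MvPolynomial.X 1 ^ p.2.toNat

/-- The ideal of `K[x,y]` generated by the monomials in `A`. -/
noncomputable def idealOf (K : Type*) [CommSemiring K] (A : Set Mon) :
    Ideal (MvPolynomial (Fin 2) K) :=
  Ideal.span (monOf K '' A)

/-- The Hilbert function of `K[x,y]/I` for the grading with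
`deg x = wt 0`, `deg y = wt 1`: the `K`-dimension of the image of the
space of weighted-degree-`d` homogeneous polynomials in the quotient. -/
noncomputable def HF (K : Type*) [CommRing K] (wt : Fin 2 → ℕ)
    (I : Ideal (MvPolynomial (Fin 2) K)) (d : ℕ) : ℕ :=
  Module.finrank K
    ((MvPolynomial.weightedHomogeneousSubmodule K wt d).map
      (Ideal.Quotient.mkₐ K I).toLinearMap)

/-- The lexicographic order on exponent vectors with `x ≺ y` (compare the
exponent of `y` first).  `lexYle s t` means `s ⪯ t`. -/
def lexYle (s t : Fin 2 →₀ ℕ) : Prop := s 1 < t 1 ∨ (s 1 = t 1 ∧ s 0 ≤ t 0)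

/-- The lexicographic order on exponent vectors with `y ≺ x` (compare the
exponent of `x` first).  `lexXle s t` means `s ⪯ t`. -/
def lexXle (s t : Fin 2 →₀ ℕ) : Prop := s 0 < t 0 ∨ (s 0 = t 0 ∧ s 1 ≤ t 1)

/-- The initial ideal of `I` for a monomial order `le`: the ideal
generated by the `le`-largest monomials of the nonzero elements of `I`. -/
noncomputable def initialIdeal (K : Type*) [CommSemiring K]
    (le : (Fin 2 →₀ ℕ) → (Fin 2 →₀ ℕ) → Prop)
    (I : Ideal (MvPolynomial (Fin 2) K)) : Ideal (MvPolynomial (Fin 2) K) :=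
  Ideal.span {g | ∃ f ∈ I, f ≠ 0 ∧ ∃ s ∈ f.support,
    (∀ t ∈ f.support, le t s) ∧ g = MvPolynomial.monomial s (1 : K)}

end MonId

namespace MonId

/-- The lex-least monomial ideal with Hilbert function `h` in the
standard grading: all monomials `x^α y^β` with `β ≥ h(α + β)`. -/
def MminusSet (h : ℕ → ℕ) : Set Mon :=
  {p | inS p ∧ ((h ((p.1 + p.2).toNat) : ℤ) ≤ p.2)}

/-- The lex-most monomial ideal with Hilbert function `h` in the
standard grading: all monomials `x^α y^β` with `α ≥ h(α + β)`. -/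
def MplusSet (h : ℕ → ℕ) : Set Mon :=
  {p | inS p ∧ ((h ((p.1 + p.2).toNat) : ℤ) ≤ p.1)}

end MonId

open MonId

section Aux

open MvPolynomial

variable {K : Type*} [Field K]

private lemma jkcases {j k : Fin 2} (hjk : j ≠ k) : (j = 0 ∧ k = 1) ∨ (j = 1 ∧ k = 0) := by
  fin_cases j <;> fin_cases k <;> simp_all

private lemma swapsum {j k : Fin 2} (hjk : j ≠ k) (s : Fin 2 →₀ ℕ) :
    s j + s k = s 0 + s 1 := by
  rcases jkcases hjk with ⟨rfl, rfl⟩ | ⟨rfl, rfl⟩ <;> omega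

private lemma fin2_ext {j k : Fin 2} (hjk : j ≠ k) {s t : Fin 2 →₀ ℕ}
    (h1 : s j = t j) (h2 : s k = t k) : s = t := by
  ext i
  fin_cases i <;> rcases jkcases hjk with ⟨rfl, rfl⟩ | ⟨rfl, rfl⟩ <;>
    first | exact h1 | exact h2

private lemma weight11 (s : Fin 2 →₀ ℕ) : Finsupp.weight ![1, 1] s = s 0 + s 1 := by
  rw [Finsupp.weight_apply, Finsupp.sum_fintype _ _ (fun i => by simp), Fin.sum_univ_two]
  simp

private lemma degree2 (s : Fin 2 →₀ ℕ) : Finsupp.degree s = s 0 + s 1 := by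
  rw [show Finsupp.degree s = Finsupp.weight 1 s from DFunLike.congr_fun Finsupp.degree_eq_weight_one s,
    Finsupp.weight_apply, Finsupp.sum_fintype _ _ (fun i => by simp), Fin.sum_univ_two]
  simp

private lemma memV_iff {f : MvPolynomial (Fin 2) K} {d : ℕ} :
    f ∈ weightedHomogeneousSubmodule K ![1, 1] d ↔ ∀ t ∈ f.support, t 0 + t 1 = d := by
  rw [mem_weightedHomogeneousSubmodule]
  constructor
  · intro hf t ht
    have := hf (mem_support_iff.1 ht)
    rwa [weight11] at this
  · intro hf t ht
    rw [weight11]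
    exact hf t (mem_support_iff.2 ht)

private lemma isHomog_of_V {f : MvPolynomial (Fin 2) K} {d : ℕ}
    (hf : f ∈ weightedHomogeneousSubmodule K ![1, 1] d) : f.IsHomogeneous d := by
  intro t ht
  rw [show (Finsupp.weight (1 : Fin 2 → ℕ)) t = Finsupp.degree t from
      (DFunLike.congr_fun Finsupp.degree_eq_weight_one t).symm, degree2]
  exact memV_iff.1 hf t (mem_support_iff.2 ht)

private noncomputable def ee (j k : Fin 2) (d u : ℕ) : Fin 2 →₀ ℕ :=
  Finsupp.single j u + Finsupp.single k (d - u)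

private lemma ee_j {j k : Fin 2} (hjk : j ≠ k) (d u : ℕ) : ee j k d u j = u := by
  simp [ee, Finsupp.single_apply, hjk, Ne.symm hjk]

private lemma ee_k {j k : Fin 2} (hjk : j ≠ k) (d u : ℕ) : ee j k d u k = d - u := by
  simp [ee, Finsupp.single_apply, hjk, Ne.symm hjk]

private lemma ee_sum {j k : Fin 2} (hjk : j ≠ k) {d u : ℕ} (hud : u ≤ d) :
    ee j k d u 0 + ee j k d u 1 = d := by
  have h1 := ee_j hjk d u
  have h2 := ee_k hjk d u
  have h3 := swapsum hjk (ee j k d u)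
  omega

private lemma ee_inj {j k : Fin 2} (hjk : j ≠ k) {d u v : ℕ}
    (h : ee j k d u = ee j k d v) : u = v := by
  have := congrArg (fun s : Fin 2 →₀ ℕ => s j) h
  simpa [ee_j hjk] using this

end Aux

section Aux2

open MvPolynomial

variable {K : Type*} [Field K]

private noncomputable def Phi (K : Type*) [Field K] (j k : Fin 2) (d : ℕ) :
    MvPolynomial (Fin 2) K →ₗ[K] (Fin (d + 1) → K) :=
  LinearMap.pi fun u => lcoeff K (ee j k d u.val)

private noncomputable def Psi (K : Type*) [Field K] (j k : Fin 2) (d : ℕ) :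
    (Fin (d + 1) → K) →ₗ[K] MvPolynomial (Fin 2) K :=
  ∑ u : Fin (d + 1), (monomial (ee j k d u.val)).comp (LinearMap.proj u)

private lemma Phi_apply (j k : Fin 2) (d : ℕ) (f : MvPolynomial (Fin 2) K) (u : Fin (d + 1)) :
    Phi K j k d f u = coeff (ee j k d u.val) f := rfl

private lemma Psi_apply (j k : Fin 2) (d : ℕ) (c : Fin (d + 1) → K) :
    Psi K j k d c = ∑ u : Fin (d + 1), monomial (ee j k d u.val) (c u) := by
  simp [Psi, LinearMap.sum_apply, LinearMap.comp_apply, LinearMap.proj_apply]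

private lemma coeff_Psi {j k : Fin 2} (hjk : j ≠ k) (d : ℕ) (c : Fin (d + 1) → K)
    (u : Fin (d + 1)) : coeff (ee j k d u.val) (Psi K j k d c) = c u := by
  classical
  rw [Psi_apply, coeff_sum]
  have hcong : ∀ v : Fin (d + 1),
      coeff (ee j k d u.val) (monomial (ee j k d v.val) (c v)) = if v = u then c v else 0 := by
    intro v
    rw [coeff_monomial]
    by_cases hv : v = u
    · subst hv; rw [if_pos rfl, if_pos rfl]
    · rw [if_neg, if_neg hv]
      intro hee
      exact hv (Fin.ext (ee_inj hjk hee))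
  rw [Finset.sum_congr rfl fun v _ => hcong v, Finset.sum_ite_eq' Finset.univ u c]
  simp

private lemma supp_Psi {j k : Fin 2} (hjk : j ≠ k) (d : ℕ) (c : Fin (d + 1) → K)
    {t : Fin 2 →₀ ℕ} (ht : t ∈ (Psi K j k d c).support) :
    ∃ u : Fin (d + 1), t = ee j k d u.val ∧ c u ≠ 0 := by
  classical
  rw [mem_support_iff, Psi_apply, coeff_sum] at ht
  obtain ⟨u, -, hu⟩ := Finset.exists_ne_zero_of_sum_ne_zero ht
  rw [coeff_monomial] at hu
  by_cases he : ee j k d u.val = t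
  · exact ⟨u, he.symm, by rwa [if_pos he] at hu⟩
  · rw [if_neg he] at hu; exact absurd rfl hu

private lemma Psi_mem_V {j k : Fin 2} (hjk : j ≠ k) (d : ℕ) (c : Fin (d + 1) → K) :
    Psi K j k d c ∈ weightedHomogeneousSubmodule K ![1, 1] d := by
  rw [Psi_apply]
  apply Submodule.sum_mem
  intro u _
  rw [mem_weightedHomogeneousSubmodule]
  exact isWeightedHomogeneous_monomial _ _ _
    (by rw [weight11]; exact ee_sum hjk (Nat.lt_succ_iff.1 u.isLt))

private lemma Psi_Phi {j k : Fin 2} (hjk : j ≠ k) {d : ℕ} {f : MvPolynomial (Fin 2) K}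
    (hf : f ∈ weightedHomogeneousSubmodule K ![1, 1] d) :
    Psi K j k d (Phi K j k d f) = f := by
  classical
  apply MvPolynomial.ext
  intro t
  rw [Psi_apply, coeff_sum]
  simp only [Phi_apply, coeff_monomial]
  by_cases ht : t 0 + t 1 = d
  · have hss := swapsum hjk t
    have htj : t j ≤ d := by omega
    have hte : ee j k d (t j) = t :=
      fin2_ext hjk (ee_j hjk d (t j)) (by rw [ee_k hjk]; omega)
    have hcong : ∀ v : Fin (d + 1),
        (if ee j k d v.val = t then coeff (ee j k d v.val) f else 0)
          = if v = (⟨t j, by omega⟩ : Fin (d + 1)) then coeff t f else 0 := by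
      intro v
      by_cases hv : ee j k d v.val = t
      · rw [if_pos hv, hv, if_pos (Fin.ext (ee_inj hjk (hv.trans hte.symm)))]
      · rw [if_neg hv, if_neg (fun hvu => hv (by rw [hvu]; exact hte))]
    rw [Finset.sum_congr rfl fun v _ => hcong v,
      Finset.sum_ite_eq' Finset.univ (⟨t j, by omega⟩ : Fin (d + 1)) (fun _ => coeff t f)]
    simp
  · have hne : ∀ v : Fin (d + 1), ee j k d v.val ≠ t := by
      intro v he
      exact ht (by rw [← he]; exact ee_sum hjk (Nat.lt_succ_iff.1 v.isLt))
    rw [Finset.sum_eq_zero fun v _ => if_neg (hne v)]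
    rcases eq_or_ne (coeff t f) 0 with h0 | h0
    · rw [h0]
    · exact absurd (memV_iff.1 hf t (mem_support_iff.2 h0)) ht

private lemma Phi_Psi {j k : Fin 2} (hjk : j ≠ k) (d : ℕ) (c : Fin (d + 1) → K) :
    Phi K j k d (Psi K j k d c) = c :=
  funext fun u => coeff_Psi hjk d c u

private lemma mon_eq (t : Fin 2 →₀ ℕ) :
    (X 0 : MvPolynomial (Fin 2) K) ^ t 0 * X 1 ^ t 1 = monomial t 1 := by
  rw [X_pow_eq_monomial, X_pow_eq_monomial, monomial_mul, one_mul]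
  have hte : (Finsupp.single (0 : Fin 2) (t 0) + Finsupp.single 1 (t 1)) = t :=
    fin2_ext (j := (0 : Fin 2)) (k := 1) (by decide)
      (by simp [Finsupp.single_apply]) (by simp [Finsupp.single_apply])
  rw [hte]

end Aux2

section Aux3

open MvPolynomial

variable {K : Type*} [Field K]

set_option maxHeartbeats 2000000 in
set_option synthInstance.maxHeartbeats 1000000 in
private lemma exists_leading
    (h : ℕ → ℕ) (I : Ideal (MvPolynomial (Fin 2) K))
    (hHF : ∀ d : ℕ, HF K ![1, 1] I d = h d)
    (hsupp : ∀ d : ℕ, ∀ f ∈ I, f.IsHomogeneous d → f ≠ 0 → h d + 1 ≤ f.support.card)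
    {j k : Fin 2} (hjk : j ≠ k) (d u : ℕ) (hu1 : h d ≤ u) (hu2 : u ≤ d) :
    ∃ f ∈ I, f ∈ weightedHomogeneousSubmodule K ![1, 1] d ∧
      coeff (ee j k d u) f ≠ 0 ∧ ∀ t ∈ f.support, t j ≤ u := by
  classical
  set V : Submodule K (MvPolynomial (Fin 2) K) :=
    weightedHomogeneousSubmodule K ![1, 1] d with hVdef
  set W0 : Submodule K (MvPolynomial (Fin 2) K) :=
    V ⊓ Submodule.restrictScalars K I with hW0def
  have hPsiV : ∀ c : Fin (d + 1) → K, Psi K j k d c ∈ V := fun c => Psi_mem_V hjk d c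
  let eqV : V ≃ₗ[K] (Fin (d + 1) → K) :=
    LinearEquiv.ofLinear ((Phi K j k d).domRestrict V)
      (LinearMap.codRestrict V (Psi K j k d) hPsiV)
      (LinearMap.ext fun c => Phi_Psi hjk d c)
      (LinearMap.ext fun x => Subtype.ext (Psi_Phi hjk x.2))
  haveI : FiniteDimensional K V := Module.Finite.equiv eqV.symm
  have hdimV : Module.finrank K V = d + 1 := by
    rw [eqV.finrank_eq, Module.finrank_pi, Fintype.card_fin]
  -- rank–nullity
  have hrn := LinearMap.finrank_range_add_finrank_ker
    ((Ideal.Quotient.mkₐ K I).toLinearMap.comp V.subtype)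
  have hrange : LinearMap.range ((Ideal.Quotient.mkₐ K I).toLinearMap.comp V.subtype)
      = Submodule.map (Ideal.Quotient.mkₐ K I).toLinearMap V := by
    rw [LinearMap.range_comp, Submodule.range_subtype]
  have hHFd : Module.finrank K
      (Submodule.map (Ideal.Quotient.mkₐ K I).toLinearMap V) = h d := hHF d
  have kerEq : (LinearMap.ker
      ((Ideal.Quotient.mkₐ K I).toLinearMap.comp V.subtype)) ≃ₗ[K] W0 :=
    { toFun := fun x => ⟨(x.1 : MvPolynomial (Fin 2) K), Submodule.mem_inf.2 ⟨x.1.2, by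
        rw [Submodule.restrictScalars_mem]
        have hx := LinearMap.mem_ker.1 x.2
        rw [LinearMap.comp_apply] at hx
        exact Ideal.Quotient.eq_zero_iff_mem.1 (by simpa using hx)⟩⟩
      map_add' := fun _ _ => rfl
      map_smul' := fun _ _ => rfl
      invFun := fun y => ⟨⟨(y : MvPolynomial (Fin 2) K), (Submodule.mem_inf.1 y.2).1⟩, by
        rw [LinearMap.mem_ker, LinearMap.comp_apply]
        have hy : (y : MvPolynomial (Fin 2) K) ∈ I := by
          have := (Submodule.mem_inf.1 y.2).2
          rwa [Submodule.restrictScalars_mem] at this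
        simpa using Ideal.Quotient.eq_zero_iff_mem.2 hy⟩
      left_inv := fun _ => rfl
      right_inv := fun _ => rfl }
  have hkey : h d + Module.finrank K W0 = d + 1 := by
    have e1 : Module.finrank K
        (LinearMap.range ((Ideal.Quotient.mkₐ K I).toLinearMap.comp V.subtype)) = h d := by
      rw [hrange]; exact hHFd
    have e2 : Module.finrank K
        (LinearMap.ker ((Ideal.Quotient.mkₐ K I).toLinearMap.comp V.subtype))
        = Module.finrank K W0 := kerEq.finrank_eq
    rw [e1, e2, hdimV] at hrn
    exact hrn
  -- the image of the degree-d part of I in coordinates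
  set Wsub : Submodule K (Fin (d + 1) → K) := Submodule.map (Phi K j k d) W0 with hWsubdef
  have hinj3 : Function.Injective ((Phi K j k d).comp W0.subtype) := by
    intro x y hxy
    have hx : (x : MvPolynomial (Fin 2) K) ∈ V := (Submodule.mem_inf.1 x.2).1
    have hy : (y : MvPolynomial (Fin 2) K) ∈ V := (Submodule.mem_inf.1 y.2).1
    have hxy' : Phi K j k d x.1 = Phi K j k d y.1 := hxy
    apply Subtype.ext
    calc (x : MvPolynomial (Fin 2) K)
        = Psi K j k d (Phi K j k d x.1) := (Psi_Phi hjk hx).symm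
      _ = Psi K j k d (Phi K j k d y.1) := by rw [hxy']
      _ = y.1 := Psi_Phi hjk hy
  have hdimW : Module.finrank K Wsub = Module.finrank K W0 := by
    have h5 := LinearMap.finrank_range_of_inj hinj3
    rwa [LinearMap.range_comp, Submodule.range_subtype] at h5
  have hmemW : ∀ c, c ∈ Wsub → ∃ f, f ∈ I ∧ f ∈ V ∧ Phi K j k d f = c := by
    intro c hc
    obtain ⟨f, hf, rfl⟩ := Submodule.mem_map.1 hc
    refine ⟨f, ?_, (Submodule.mem_inf.1 hf).1, rfl⟩
    have := (Submodule.mem_inf.1 hf).2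
    rwa [Submodule.restrictScalars_mem] at this
  have hcardW : ∀ c ∈ Wsub, c ≠ 0 →
      h d + 1 ≤ (Finset.univ.filter fun v : Fin (d + 1) => c v ≠ 0).card := by
    intro c hc hc0
    obtain ⟨f, hfI, hfV, rfl⟩ := hmemW c hc
    have hf0 : f ≠ 0 := by rintro rfl; exact hc0 (map_zero _)
    have hcard := hsupp d f hfI (isHomog_of_V hfV) hf0
    refine le_trans hcard (Finset.card_le_card_of_injOn
      (fun t => (⟨min (t j) d, by omega⟩ : Fin (d + 1))) ?_ ?_)
    · intro t ht
      have htd : t 0 + t 1 = d := memV_iff.1 hfV t ht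
      have hss := swapsum hjk t
      have htj : t j ≤ d := by omega
      have hte : ee j k d (t j) = t :=
        fin2_ext hjk (ee_j hjk d (t j)) (by rw [ee_k hjk]; omega)
      simp only [Finset.mem_coe, Finset.mem_filter, Finset.mem_univ, true_and]
      show coeff (ee j k d (min (t j) d)) f ≠ 0
      rw [min_eq_left htj, hte]
      exact mem_support_iff.1 ht
    · intro t ht t' ht' hmin
      simp only [Finset.mem_coe] at ht ht'
      have htd : t 0 + t 1 = d := memV_iff.1 hfV t ht
      have htd' : t' 0 + t' 1 = d := memV_iff.1 hfV t' ht'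
      have hss := swapsum hjk t
      have hss' := swapsum hjk t'
      have h1 : min (t j) d = min (t' j) d := congrArg Fin.val hmin
      exact fin2_ext hjk (by omega) (by omega)
  -- leading positions
  set PP : Fin (d + 1) → Prop :=
    fun v => ∃ c ∈ Wsub, c v ≠ 0 ∧ ∀ v' : Fin (d + 1), v < v' → c v' = 0 with hPP
  set L : Finset (Fin (d + 1)) := Finset.univ.filter PP with hLdef
  set F : Finset (Fin (d + 1)) :=
    Finset.univ.filter (fun v : Fin (d + 1) => h d ≤ v.val) with hFdef
  have hLF : L ⊆ F := by
    intro v hv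
    rw [hLdef, Finset.mem_filter] at hv
    obtain ⟨-, c, hcW, hcv, hlead⟩ := hv
    have hcard := hcardW c hcW (fun h0 => hcv (by rw [h0]; rfl))
    have hle : (Finset.univ.filter fun v' : Fin (d + 1) => c v' ≠ 0).card ≤ v.val + 1 := by
      refine le_trans (Finset.card_le_card_of_injOn Fin.val
        (t := Finset.range (v.val + 1)) ?_ ?_) (le_of_eq (Finset.card_range _))
      · intro w hw
        rw [Finset.mem_coe, Finset.mem_filter] at hw
        rw [Finset.mem_coe, Finset.mem_range]
        by_contra hcon
        exact hw.2 (hlead w (Fin.lt_def.mpr (by omega)))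
      · exact fun a _ b _ hab => Fin.ext hab
    rw [hFdef, Finset.mem_filter]
    exact ⟨Finset.mem_univ _, by omega⟩
  have hFneg : h d ≤ (Finset.univ.filter fun v : Fin (d + 1) => ¬ h d ≤ v.val).card := by
    refine le_trans (le_of_eq (Finset.card_range (h d)).symm)
      (Finset.card_le_card_of_injOn
        (fun n : ℕ => (⟨min n d, by omega⟩ : Fin (d + 1))) ?_ ?_)
    · intro n hn
      rw [Finset.mem_coe, Finset.mem_range] at hn
      rw [Finset.mem_coe, Finset.mem_filter]
      refine ⟨Finset.mem_univ _, ?_⟩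
      show ¬ h d ≤ min n d
      omega
    · intro n hn n' hn' hmm
      simp only [Finset.mem_coe, Finset.mem_range] at hn hn'
      have h1 : min n d = min n' d := congrArg Fin.val hmm
      omega
  have hFcard : F.card
      + (Finset.univ.filter fun v : Fin (d + 1) => ¬ h d ≤ v.val).card = d + 1 := by
    rw [hFdef, Finset.card_filter_add_card_filter_not]
    simp
  have hrankL : Module.finrank K Wsub ≤ L.card := by
    let π : Wsub →ₗ[K] ({x // x ∈ L} → K) :=
      (LinearMap.pi fun v : {x // x ∈ L} => LinearMap.proj (v : Fin (d + 1))).comp Wsub.subtype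
    have hπ : Function.Injective π := by
      rw [← LinearMap.ker_eq_bot, Submodule.eq_bot_iff]
      intro x hx
      rw [LinearMap.mem_ker] at hx
      by_contra hx0
      have hx1 : (x : Fin (d + 1) → K) ≠ 0 := fun h0 => hx0 (Subtype.ext h0)
      have hne : (Finset.univ.filter fun v : Fin (d + 1) =>
          (x : Fin (d + 1) → K) v ≠ 0).Nonempty := by
        obtain ⟨v, hv⟩ := Function.ne_iff.1 hx1
        exact ⟨v, Finset.mem_filter.2 ⟨Finset.mem_univ _, hv⟩⟩
      set umax := (Finset.univ.filter fun v : Fin (d + 1) =>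
        (x : Fin (d + 1) → K) v ≠ 0).max' hne with humaxdef
      have humem := (Finset.univ.filter fun v : Fin (d + 1) =>
        (x : Fin (d + 1) → K) v ≠ 0).max'_mem hne
      rw [Finset.mem_filter] at humem
      have huL : umax ∈ L := by
        rw [hLdef, Finset.mem_filter]
        refine ⟨Finset.mem_univ _, (x : Fin (d + 1) → K), x.2, humem.2, ?_⟩
        intro v' hv'
        by_contra hv0
        have hmem : v' ∈ Finset.univ.filter fun v : Fin (d + 1) =>
            (x : Fin (d + 1) → K) v ≠ 0 := Finset.mem_filter.2 ⟨Finset.mem_univ _, hv0⟩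
        exact absurd (Finset.le_max' _ v' hmem) (not_le.2 hv')
      exact humem.2 (congrFun hx ⟨umax, huL⟩)
    calc Module.finrank K Wsub ≤ Module.finrank K ({x // x ∈ L} → K) :=
        LinearMap.finrank_le_finrank_of_injective hπ
      _ = L.card := by rw [Module.finrank_pi, Fintype.card_coe]
  have hLFeq : L = F := Finset.eq_of_subset_of_card_le hLF (by omega)
  have huF : (⟨u, by omega⟩ : Fin (d + 1)) ∈ F :=
    Finset.mem_filter.2 ⟨Finset.mem_univ _, hu1⟩
  have huL : (⟨u, by omega⟩ : Fin (d + 1)) ∈ L := (Finset.ext_iff.1 hLFeq _).2 huF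
  have huP : PP ⟨u, by omega⟩ := (Finset.mem_filter.1 huL).2
  obtain ⟨c, hcW, hcu, hlead⟩ := huP
  obtain ⟨f, hfI, hfV, rfl⟩ := hmemW c hcW
  refine ⟨f, hfI, hfV, hcu, ?_⟩
  intro t ht
  have htd : t 0 + t 1 = d := memV_iff.1 hfV t ht
  have hss := swapsum hjk t
  have htj : t j ≤ d := by omega
  have hte : ee j k d (t j) = t :=
    fin2_ext hjk (ee_j hjk d (t j)) (by rw [ee_k hjk]; omega)
  by_contra hgt
  push_neg at hgt
  have h0 : Phi K j k d f ⟨t j, by omega⟩ = 0 :=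
    hlead ⟨t j, by omega⟩ (Fin.mk_lt_mk.2 hgt)
  have hco : coeff t f = 0 := by rw [← hte]; exact h0
  exact mem_support_iff.1 ht hco

end Aux3

section Aux4

open MvPolynomial

variable {K : Type*} [Field K]

private lemma initial_eq
    (h : ℕ → ℕ) (I : Ideal (MvPolynomial (Fin 2) K))
    (hhom : ∀ f ∈ I, ∀ d : ℕ, MvPolynomial.homogeneousComponent d f ∈ I)
    (hHF : ∀ d : ℕ, HF K ![1, 1] I d = h d)
    (hsupp : ∀ d : ℕ, ∀ f ∈ I, f.IsHomogeneous d → f ≠ 0 → h d + 1 ≤ f.support.card)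
    {j k : Fin 2} (hjk : j ≠ k) :
    initialIdeal K (fun s t => s j < t j ∨ (s j = t j ∧ s k ≤ t k)) I
      = Ideal.span {g : MvPolynomial (Fin 2) K |
          ∃ t : Fin 2 →₀ ℕ, h (t j + t k) ≤ t j ∧ g = monomial t (1 : K)} := by
  classical
  apply le_antisymm
  · unfold initialIdeal
    apply Ideal.span_le.2
    rintro g ⟨f, hfI, hf0, s, hs, hmax, rfl⟩
    apply Ideal.subset_span
    refine ⟨s, ?_, rfl⟩
    show h (s j + s k) ≤ s j
    set d := s j + s k with hd
    have hdeg : Finsupp.degree s = d := by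
      rw [degree2]; have := swapsum hjk s; omega
    set fd := homogeneousComponent d f with hfd
    have hsfd : s ∈ fd.support := by
      rw [mem_support_iff, hfd, coeff_homogeneousComponent, if_pos hdeg]
      exact mem_support_iff.1 hs
    have hfd0 : fd ≠ 0 := fun h0 => by rw [h0] at hsfd; simp at hsfd
    have hcard := hsupp d fd (hhom f hfI d) (homogeneousComponent_isHomogeneous d f) hfd0
    have hsub : ∀ t ∈ fd.support, t j ≤ s j ∧ t 0 + t 1 = d := by
      intro t ht
      have hco := mem_support_iff.1 ht
      rw [hfd, coeff_homogeneousComponent] at hco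
      by_cases hdt : Finsupp.degree t = d
      · rw [if_pos hdt] at hco
        have htf : t ∈ f.support := mem_support_iff.2 hco
        have hm := hmax t htf
        have h2 : t 0 + t 1 = d := by rw [degree2] at hdt; exact hdt
        refine ⟨?_, h2⟩
        rcases hm with hm | ⟨hm1, hm2⟩ <;> omega
      · rw [if_neg hdt] at hco; exact absurd rfl hco
    have hle : fd.support.card ≤ s j + 1 := by
      refine le_trans (Finset.card_le_card_of_injOn (fun t => t j)
        (t := Finset.range (s j + 1)) ?_ ?_) (le_of_eq (Finset.card_range _))
      · intro t ht
        rw [Finset.mem_coe, Finset.mem_range]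
        show t j < s j + 1
        have := (hsub t ht).1
        omega
      · intro t ht t' ht' hjj
        simp only [Finset.mem_coe] at ht ht'
        have hjj' : t j = t' j := hjj
        have h1 := (hsub t ht).2
        have h2 := (hsub t' ht').2
        have h3 := swapsum hjk t
        have h4 := swapsum hjk t'
        exact fin2_ext hjk hjj' (by omega)
    exact Nat.succ_le_succ_iff.mp (le_trans hcard hle)
  · apply Ideal.span_le.2
    rintro g ⟨t, ht, rfl⟩
    obtain ⟨f, hfI, hfV, hcoeff, hbound⟩ :=
      exists_leading h I hHF hsupp hjk (t j + t k) (t j) ht (Nat.le_add_right _ _)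
    have hte : ee j k (t j + t k) (t j) = t :=
      fin2_ext hjk (ee_j hjk _ _) (by rw [ee_k hjk]; omega)
    rw [hte] at hcoeff
    refine Ideal.subset_span ⟨f, hfI, ?_, t, mem_support_iff.2 hcoeff, ?_, rfl⟩
    · rintro rfl; simp at hcoeff
    · intro t' ht'
      have h1 : t' j ≤ t j := hbound t' ht'
      rcases lt_or_eq_of_le h1 with hlt | heq
      · exact Or.inl hlt
      · refine Or.inr ⟨heq, ?_⟩
        have h2 := memV_iff.1 hfV t' ht'
        have h3 := swapsum hjk t'
        omega

end Aux4





/-- Remark `rem:InitialRowReduction`.  In the standard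
grading, let `h` be the Hilbert function of a finite-colength monomial
ideal, with lex-least and lex-most ideals `M⁻` and `M⁺`.  If `I` is a
homogeneous ideal with Hilbert function `h` such that every nonzero
degree-`d` homogeneous polynomial of `I` has at least `h(d) + 1` monomials
in its support (for every `d`), then `in_≺(I) = M⁻` and
`in_{≺ᵒᵖᵖ}(I) = M⁺`. -/
theorem uniform_tropicalization_forces_initial_ideals
    (K : Type*) [Field K]
    (h : ℕ → ℕ) (hId : IsMonIdeal (MminusSet h))
    (I : Ideal (MvPolynomial (Fin 2) K))
    (hhom : ∀ f ∈ I, ∀ d : ℕ, MvPolynomial.homogeneousComponent d f ∈ I)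
    (hHF : ∀ d : ℕ, HF K ![1, 1] I d = h d)
    (hsupp : ∀ d : ℕ, ∀ f ∈ I, f.IsHomogeneous d → f ≠ 0 →
      h d + 1 ≤ f.support.card) :
    initialIdeal K lexYle I = idealOf K (MminusSet h) ∧
    initialIdeal K lexXle I = idealOf K (MplusSet h) := by
  classical
  constructor
  · have key := initial_eq h I hhom hHF hsupp (j := (1 : Fin 2)) (k := 0) (by decide)
    have hset : {g : MvPolynomial (Fin 2) K |
        ∃ t : Fin 2 →₀ ℕ, h (t 1 + t 0) ≤ t 1 ∧ g = MvPolynomial.monomial t (1 : K)}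
        = monOf K '' MminusSet h := by
      ext g
      constructor
      · rintro ⟨t, ht, rfl⟩
        refine ⟨((t 0 : ℤ), (t 1 : ℤ)), ⟨⟨Int.natCast_nonneg _, Int.natCast_nonneg _⟩, ?_⟩, ?_⟩
        · show (h (((t 0 : ℤ) + (t 1 : ℤ)).toNat) : ℤ) ≤ (t 1 : ℤ)
          have ht' : h (t 1 + t 0) ≤ t 1 := ht
          have e1 : ((t 0 : ℤ) + (t 1 : ℤ)).toNat = t 1 + t 0 := by omega
          rw [e1]
          exact_mod_cast ht'
        · show (MvPolynomial.X 0 : MvPolynomial (Fin 2) K) ^ ((t 0 : ℤ)).toNat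
              * MvPolynomial.X 1 ^ ((t 1 : ℤ)).toNat = MvPolynomial.monomial t 1
          simp only [Int.toNat_natCast]
          exact mon_eq t
      · rintro ⟨p, ⟨⟨hp1, hp2⟩, hple⟩, rfl⟩
        have e0 : ((Finsupp.single (0 : Fin 2) p.1.toNat + Finsupp.single 1 p.2.toNat : Fin 2 →₀ ℕ)) 0
            = p.1.toNat := by simp [Finsupp.single_apply]
        have e1 : ((Finsupp.single (0 : Fin 2) p.1.toNat + Finsupp.single 1 p.2.toNat : Fin 2 →₀ ℕ)) 1
            = p.2.toNat := by simp [Finsupp.single_apply]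
        refine ⟨Finsupp.single 0 p.1.toNat + Finsupp.single 1 p.2.toNat, ?_, ?_⟩
        · rw [e0, e1]
          have e2 : (p.1 + p.2).toNat = p.2.toNat + p.1.toNat := by omega
          rw [← e2]
          omega
        · rw [← mon_eq, e0, e1]
          rfl
    rw [hset] at key
    exact key
  · have key := initial_eq h I hhom hHF hsupp (j := (0 : Fin 2)) (k := 1) (by decide)
    have hset : {g : MvPolynomial (Fin 2) K |
        ∃ t : Fin 2 →₀ ℕ, h (t 0 + t 1) ≤ t 0 ∧ g = MvPolynomial.monomial t (1 : K)}
        = monOf K '' MplusSet h := by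
      ext g
      constructor
      · rintro ⟨t, ht, rfl⟩
        refine ⟨((t 0 : ℤ), (t 1 : ℤ)), ⟨⟨Int.natCast_nonneg _, Int.natCast_nonneg _⟩, ?_⟩, ?_⟩
        · show (h (((t 0 : ℤ) + (t 1 : ℤ)).toNat) : ℤ) ≤ (t 0 : ℤ)
          have ht' : h (t 0 + t 1) ≤ t 0 := ht
          have e1 : ((t 0 : ℤ) + (t 1 : ℤ)).toNat = t 0 + t 1 := by omega
          rw [e1]
          exact_mod_cast ht'
        · show (MvPolynomial.X 0 : MvPolynomial (Fin 2) K) ^ ((t 0 : ℤ)).toNat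
              * MvPolynomial.X 1 ^ ((t 1 : ℤ)).toNat = MvPolynomial.monomial t 1
          simp only [Int.toNat_natCast]
          exact mon_eq t
      · rintro ⟨p, ⟨⟨hp1, hp2⟩, hple⟩, rfl⟩
        have e0 : ((Finsupp.single (0 : Fin 2) p.1.toNat + Finsupp.single 1 p.2.toNat : Fin 2 →₀ ℕ)) 0
            = p.1.toNat := by simp [Finsupp.single_apply]
        have e1 : ((Finsupp.single (0 : Fin 2) p.1.toNat + Finsupp.single 1 p.2.toNat : Fin 2 →₀ ℕ)) 1
            = p.2.toNat := by simp [Finsupp.single_apply]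
        refine ⟨Finsupp.single 0 p.1.toNat + Finsupp.single 1 p.2.toNat, ?_, ?_⟩
        · rw [e0, e1]
          have e2 : (p.1 + p.2).toNat = p.1.toNat + p.2.toNat := by omega
          rw [← e2]
          omega
        · rw [← mon_eq, e0, e1]
          rfl
    rw [hset] at key
    exact key
end

section
/- Give S = K[x,y] the standard grading (a = b = 1, r = x/y) and let M ⊆ S be a monomial ideal of finite colength with minimal generators m_0 ≺ m_1 ≺ ⋯ ≺ m_e, written m_k = x^{α_k} y^{β_k} (so α_0 > α_1 > ⋯ > α_e = 0 and 0 = β_0 < β_1 < ⋯ < β_e). Then T⁻(M) = ∅ if and only if β_k = k for all 0 ≤ k ≤ e; equivalently, the row lengths of the Young diagram of M are strictly decreasing, and equivalently w_k = y·m_{k−1} for all 1 ≤ k ≤ e. Dually, T⁺(M) = ∅ if and only if α_k = e − k for all 0 ≤ k ≤ e; equivalently, the column lengths of the Young diagram of M are strictly decreasing. -/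
open MonId

namespace MonId

/-- The length of row `β` of the Young diagram of `M`: the number of
monomials `x^α y^β ∉ M`. -/
noncomputable def rowLen (M : Set Mon) (β : ℕ) : ℕ :=
  Nat.card {α : ℤ // 0 ≤ α ∧ (α, (β : ℤ)) ∉ M}

/-- The length of column `α` of the Young diagram of `M`: the number of
monomials `x^α y^β ∉ M`. -/
noncomputable def colLen (M : Set Mon) (α : ℕ) : ℕ :=
  Nat.card {β : ℤ // 0 ≤ β ∧ ((α : ℤ), β) ∉ M}

end MonId

namespace MonId

section Aux

variable {M : Set Mon} {e : ℕ} {m : ℕ → Mon}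

lemma mem_add (hM : IsMonIdeal M) {p : Mon} (hp : p ∈ M) :
    ∀ i j : ℕ, (p.1 + i, p.2 + j) ∈ M := by
  have hx : ∀ i : ℕ, (p.1 + i, p.2) ∈ M := by
    intro i
    induction i with
    | zero => simpa using hp
    | succ n ih =>
      have := (hM.2.1 _ ih).1
      simpa [add_assoc] using this
  intro i j
  induction j with
  | zero => simpa using hx i
  | succ n ih =>
    have := (hM.2.1 _ ih).2
    simpa [add_assoc] using this

lemma mem_up (hM : IsMonIdeal M) {p q : Mon} (hp : p ∈ M)
    (h1 : p.1 ≤ q.1) (h2 : p.2 ≤ q.2) : q ∈ M := by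
  have := mem_add hM hp (q.1 - p.1).toNat (q.2 - p.2).toNat
  have e1 : p.1 + ((q.1 - p.1).toNat : ℤ) = q.1 := by omega
  have e2 : p.2 + ((q.2 - p.2).toNat : ℤ) = q.2 := by omega
  rw [e1, e2] at this
  simpa using this

lemma exists_gen (hM : IsMonIdeal M) (hg : IsGenSeq M e m) {p : Mon} (hp : p ∈ M) :
    ∃ k ≤ e, (m k).1 ≤ p.1 ∧ (m k).2 ≤ p.2 := by
  obtain ⟨n, hn⟩ : ∃ n : ℕ, p.1 + p.2 ≤ (n : ℤ) := ⟨(p.1 + p.2).toNat, by omega⟩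
  induction n generalizing p with
  | zero =>
    have hmin : IsMinGen M p := by
      refine ⟨hp, fun h => ?_, fun h => ?_⟩
      · have h1 := hM.1 _ h
        have h2 := hM.1 _ hp
        simp only [inS] at h1 h2
        omega
      · have h1 := hM.1 _ h
        have h2 := hM.1 _ hp
        simp only [inS] at h1 h2
        omega
    obtain ⟨k, hk, hkp⟩ := hg.2.2 p hmin
    exact ⟨k, hk, le_of_eq (by rw [hkp]), le_of_eq (by rw [hkp])⟩
  | succ n ih =>
    by_cases h1 : (p.1 - 1, p.2) ∈ M
    · have hS := hM.1 _ h1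
      simp only [inS] at hS
      obtain ⟨k, hk, d1, d2⟩ := ih h1 (by simp; omega)
      exact ⟨k, hk, by simp at d1 ⊢; omega, d2⟩
    · by_cases h2 : (p.1, p.2 - 1) ∈ M
      · have hS := hM.1 _ h2
        simp only [inS] at hS
        obtain ⟨k, hk, d1, d2⟩ := ih h2 (by simp; omega)
        exact ⟨k, hk, d1, by simp at d2 ⊢; omega⟩
      · obtain ⟨k, hk, hkp⟩ := hg.2.2 p ⟨hp, h1, h2⟩
        exact ⟨k, hk, le_of_eq (by rw [hkp]), le_of_eq (by rw [hkp])⟩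

lemma gen_nonneg (hg : IsGenSeq M e m) (hM : IsMonIdeal M) {k : ℕ} (hk : k ≤ e) :
    0 ≤ (m k).1 ∧ 0 ≤ (m k).2 :=
  hM.1 _ (hg.1 k hk).1

lemma alpha_adj (hM : IsMonIdeal M) (hg : IsGenSeq M e m) {k : ℕ} (hk : k < e) :
    (m (k + 1)).1 < (m k).1 := by
  by_contra h
  push_neg at h
  have hb := hg.2.1 k hk
  have hmem : ((m (k+1)).1, (m (k+1)).2 - 1) ∈ M :=
    mem_up hM (hg.1 k hk.le).1 h (by omega)
  exact (hg.1 (k+1) hk).2.2 hmem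

lemma beta_gap (hg : IsGenSeq M e m) {k l : ℕ} (hkl : k ≤ l) (hl : l ≤ e) :
    (m k).2 + ((l - k : ℕ) : ℤ) ≤ (m l).2 := by
  induction l with
  | zero => interval_cases k; simp
  | succ n ih =>
    rcases Nat.eq_or_lt_of_le hkl with h | h
    · subst h; simp
    · have h1 := ih (by omega) (by omega)
      have h2 := hg.2.1 n (by omega)
      have : ((n + 1 - k : ℕ) : ℤ) = ((n - k : ℕ) : ℤ) + 1 := by omega
      omega

lemma alpha_gap (hM : IsMonIdeal M) (hg : IsGenSeq M e m) {k l : ℕ} (hkl : k ≤ l) (hl : l ≤ e) :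
    (m l).1 + ((l - k : ℕ) : ℤ) ≤ (m k).1 := by
  induction l with
  | zero => interval_cases k; simp
  | succ n ih =>
    rcases Nat.eq_or_lt_of_le hkl with h | h
    · subst h; simp
    · have h1 := ih (by omega) (by omega)
      have h2 := alpha_adj hM hg (k := n) (by omega)
      have : ((n + 1 - k : ℕ) : ℤ) = ((n - k : ℕ) : ℤ) + 1 := by omega
      omega

lemma beta_zero (hM : IsMonIdeal M) (hg : IsGenSeq M e m) : (m 0).2 = 0 := by
  obtain ⟨n, hn⟩ : ∃ n : ℕ, ((n : ℤ), (0 : ℤ)) ∈ M := by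
    by_contra h
    push_neg at h
    refine (Set.infinite_of_injective_forall_mem
      (f := fun n : ℕ => (((n : ℤ), (0 : ℤ)) : Mon))
      (s := {p : Mon | inS p ∧ p ∉ M})
      (fun a b hab => by simpa using hab)
      (fun n => ⟨⟨by simp [inS], by simp [inS]⟩, h n⟩)) hM.2.2
  obtain ⟨k, hk, _, d2⟩ := exists_gen hM hg hn
  have h0 := (gen_nonneg hg hM hk).2
  simp at d2
  have hbk : (m k).2 = 0 := le_antisymm d2 h0
  rcases Nat.eq_zero_or_pos k with h | h
  · rw [← h]; exact hbk
  · exfalso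
    have := beta_gap hg (k := 0) (l := k) (by omega) hk
    have h00 := (gen_nonneg hg hM (Nat.zero_le e)).2
    omega

lemma alpha_e (hM : IsMonIdeal M) (hg : IsGenSeq M e m) : (m e).1 = 0 := by
  obtain ⟨n, hn⟩ : ∃ n : ℕ, ((0 : ℤ), (n : ℤ)) ∈ M := by
    by_contra h
    push_neg at h
    refine (Set.infinite_of_injective_forall_mem
      (f := fun n : ℕ => (((0 : ℤ), (n : ℤ)) : Mon))
      (s := {p : Mon | inS p ∧ p ∉ M})
      (fun a b hab => by simpa using hab)
      (fun n => ⟨⟨by simp [inS], by simp [inS]⟩, h n⟩)) hM.2.2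
  obtain ⟨k, hk, d1, _⟩ := exists_gen hM hg hn
  have h0 := (gen_nonneg hg hM hk).1
  simp at d1
  have hak : (m k).1 = 0 := le_antisymm d1 h0
  rcases Nat.eq_or_lt_of_le hk with h | h
  · rw [h] at hak; exact hak
  · exfalso
    have := alpha_gap hM hg (k := k) (l := e) hk le_rfl
    have h00 := (gen_nonneg hg hM (le_refl e)).1
    omega

lemma beta_ge (hM : IsMonIdeal M) (hg : IsGenSeq M e m) {k : ℕ} (hk : k ≤ e) :
    (k : ℤ) ≤ (m k).2 := by
  have := beta_gap hg (k := 0) (l := k) (Nat.zero_le k) hk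
  have h0 := beta_zero hM hg
  omega

lemma alpha_ge (hM : IsMonIdeal M) (hg : IsGenSeq M e m) {k : ℕ} (hk : k ≤ e) :
    ((e - k : ℕ) : ℤ) ≤ (m k).1 := by
  have := alpha_gap hM hg (k := k) (l := e) hk le_rfl
  have h0 := alpha_e hM hg
  omega



lemma exists_beta_bad (hM : IsMonIdeal M) (hg : IsGenSeq M e m)
    (hbad : ¬ ∀ k ≤ e, (m k).2 = (k : ℤ)) :
    ∃ i, i < e ∧ (m i).2 = (i : ℤ) ∧ (i : ℤ) + 2 ≤ (m (i + 1)).2 := by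
  classical
  push_neg at hbad
  obtain ⟨k, hk, hkne⟩ := hbad
  have hex : ∃ j, j ≤ e ∧ (m j).2 ≠ (j : ℤ) := ⟨k, hk, hkne⟩
  obtain ⟨hk0e, hk0ne⟩ := Nat.find_spec hex
  have hmin0 : ∀ j, j < Nat.find hex → j ≤ e → (m j).2 = (j : ℤ) := by
    intro j hj hje
    have := Nat.find_min hex hj
    push_neg at this
    exact this hje
  set k0 := Nat.find hex with hk0
  have hpos : 0 < k0 := by
    rcases Nat.eq_zero_or_pos k0 with h | h
    · exfalso
      apply hk0ne
      rw [h, beta_zero hM hg]; simp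
    · exact h
  have hprev : (m (k0 - 1)).2 = ((k0 - 1 : ℕ) : ℤ) := hmin0 _ (by omega) (by omega)
  refine ⟨k0 - 1, by omega, hprev, ?_⟩
  have hge := beta_ge hM hg hk0e
  have : k0 - 1 + 1 = k0 := by omega
  rw [this]
  omega

lemma exists_alpha_bad (hM : IsMonIdeal M) (hg : IsGenSeq M e m)
    (hbad : ¬ ∀ k ≤ e, (m k).1 = ((e - k : ℕ) : ℤ)) :
    ∃ i, i < e ∧ (m (i + 1)).1 = ((e - (i + 1) : ℕ) : ℤ) ∧
      ((e - i : ℕ) : ℤ) + 1 ≤ (m i).1 := by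
  classical
  push_neg at hbad
  obtain ⟨k, hk, hkne⟩ := hbad
  have hex : ∃ j, j ≤ e ∧ (m (e - j)).1 ≠ (j : ℤ) := by
    refine ⟨e - k, by omega, ?_⟩
    have : e - (e - k) = k := by omega
    rw [this]
    exact hkne
  obtain ⟨hj0e, hj0ne⟩ := Nat.find_spec hex
  have hmin0 : ∀ j, j < Nat.find hex → j ≤ e → (m (e - j)).1 = (j : ℤ) := by
    intro j hj hje
    have := Nat.find_min hex hj
    push_neg at this
    exact this hje
  set j0 := Nat.find hex with hj0
  have hpos : 0 < j0 := by
    rcases Nat.eq_zero_or_pos j0 with h | h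
    · exfalso
      apply hj0ne
      rw [h]
      simpa using alpha_e hM hg
    · exact h
  have hprev : (m (e - (j0 - 1))).1 = ((j0 - 1 : ℕ) : ℤ) := hmin0 _ (by omega) (by omega)
  refine ⟨e - j0, by omega, ?_, ?_⟩
  · have h1 : e - j0 + 1 = e - (j0 - 1) := by omega
    rw [h1, hprev]
    omega
  · have hge := alpha_ge hM hg (k := e - j0) (by omega)
    have : e - (e - j0) = j0 := by omega
    rw [this] at hge
    have hne : (m (e - j0)).1 ≠ (j0 : ℤ) := hj0ne
    omega

lemma tminus_iff_beta (hM : IsMonIdeal M) (hg : IsGenSeq M e m) :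
    Tminus 1 1 M e m = ∅ ↔ ∀ k ≤ e, (m k).2 = (k : ℤ) := by
  constructor
  · intro hemp
    by_contra hbad
    obtain ⟨i, hie, hbi, hbi1⟩ := exists_beta_bad hM hg hbad
    have hadj := alpha_adj hM hg hie
    have hb := hg.2.1 i hie
    have hai : 1 ≤ (m i).1 := by
      have h1 := alpha_gap hM hg (k := i) (l := e) hie.le le_rfl
      have h0 := alpha_e hM hg
      omega
    have hbnn := (gen_nonneg hg hM hie.le).2
    have hmem : ((i, -1) : ℕ × ℤ) ∈ Tminus 1 1 M e m := by
      simp only [Tminus, Set.mem_setOf_eq]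
      refine ⟨hie, le_rfl, ⟨?_, ?_⟩, ?_, ?_⟩
      · simp only [rpow]; omega
      · simp only [rpow]; omega
      · intro hmm
        obtain ⟨j, hj, d1, d2⟩ := exists_gen hM hg hmm
        simp only [rpow] at d1 d2
        by_cases hji : j ≤ i
        · have := alpha_gap hM hg hji hie.le
          omega
        · push_neg at hji
          have := beta_gap hg (k := i + 1) (l := j) hji hj
          omega
      · have hw : w m (i + 1) = ((m i).1, (m (i + 1)).2) := by
          simp only [w, Nat.add_sub_cancel]
          rw [max_eq_left hadj.le, max_eq_right hb.le]
        rw [hw]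
        refine mem_up hM (hg.1 (i + 1) hie).1 ?_ ?_ <;> simp only [rpow] <;> omega
    rw [hemp] at hmem
    exact hmem
  · intro hB
    apply Set.eq_empty_iff_forall_notMem.2
    rintro ⟨i, ℓ⟩ ⟨h1, h2, h3, h4, _⟩
    apply h4
    simp only [rpow, one_mul] at h3 ⊢
    obtain ⟨hS1, hS2⟩ := h3
    set n : ℕ := i + (-ℓ).toNat with hn
    have hni : (n : ℤ) = (i : ℤ) - ℓ := by omega
    by_cases hne : n ≤ e
    · refine mem_up hM (hg.1 n hne).1 ?_ ?_
      · have hgap := alpha_gap hM hg (k := i) (l := n) (by omega) hne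
        omega
      · have hbn := hB n hne
        have hbi := hB i (by omega)
        omega
    · refine mem_up hM (hg.1 e le_rfl).1 ?_ ?_
      · have h0 := alpha_e hM hg
        omega
      · have hbe := hB e le_rfl
        have hbi := hB i (by omega)
        omega

lemma tplus_iff_alpha (hM : IsMonIdeal M) (hg : IsGenSeq M e m) :
    Tplus 1 1 M e m = ∅ ↔ ∀ k ≤ e, (m k).1 = ((e - k : ℕ) : ℤ) := by
  constructor
  · intro hemp
    by_contra hbad
    obtain ⟨i, hie, hai1, hai⟩ := exists_alpha_bad hM hg hbad
    have hadj := alpha_adj hM hg hie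
    have hb := hg.2.1 i hie
    have hbge := beta_ge hM hg (k := i + 1) hie
    have hmem : ((i + 1, 1) : ℕ × ℤ) ∈ Tplus 1 1 M e m := by
      simp only [Tplus, Set.mem_setOf_eq]
      refine ⟨by omega, by omega, le_rfl, ⟨?_, ?_⟩, ?_, ?_⟩
      · simp only [rpow]
        have := (gen_nonneg hg hM (k := i + 1) hie).1
        omega
      · simp only [rpow]; omega
      · intro hmm
        obtain ⟨j, hj, d1, d2⟩ := exists_gen hM hg hmm
        simp only [rpow] at d1 d2
        by_cases hji : j ≤ i
        · have := alpha_gap hM hg hji hie.le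
          omega
        · push_neg at hji
          have := beta_gap hg (k := i + 1) (l := j) hji hj
          omega
      · have hw : w m (i + 1) = ((m i).1, (m (i + 1)).2) := by
          simp only [w, Nat.add_sub_cancel]
          rw [max_eq_left hadj.le, max_eq_right hb.le]
        rw [hw]
        refine mem_up hM (hg.1 i hie.le).1 ?_ ?_ <;> simp only [rpow] <;> omega
    rw [hemp] at hmem
    exact hmem
  · intro hB
    apply Set.eq_empty_iff_forall_notMem.2
    rintro ⟨i, ℓ⟩ ⟨h1, h2, h3, h4, h5, _⟩
    apply h5
    simp only [rpow, one_mul] at h4 ⊢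
    obtain ⟨hS1, hS2⟩ := h4
    by_cases hli : ℓ ≤ (i : ℤ)
    · set k : ℕ := i - ℓ.toNat with hk
      have hki : (k : ℤ) = (i : ℤ) - ℓ := by omega
      refine mem_up hM (hg.1 k (by omega)).1 ?_ ?_
      · have hbk := hB k (by omega)
        have hbi := hB i h2
        omega
      · have hgap := beta_gap hg (k := k) (l := i) (by omega) h2
        omega
    · refine mem_up hM (hg.1 0 (Nat.zero_le e)).1 ?_ ?_
      · have hb0 := hB 0 (Nat.zero_le e)
        have hbi := hB i h2
        omega
      · have h00 := beta_zero hM hg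
        omega

lemma tminus_iff_w (hM : IsMonIdeal M) (hg : IsGenSeq M e m) :
    Tminus 1 1 M e m = ∅ ↔
      (∀ k : ℕ, 1 ≤ k → k ≤ e → w m k = ((m (k - 1)).1, (m (k - 1)).2 + 1)) := by
  rw [tminus_iff_beta hM hg]
  constructor
  · intro hB k hk1 hke
    have hkk : k - 1 + 1 = k := by omega
    have hadj : (m (k - 1)).2 < (m k).2 := by
      have := hg.2.1 (k - 1) (by omega)
      rwa [hkk] at this
    have haadj : (m k).1 < (m (k - 1)).1 := by
      have := alpha_adj hM hg (k := k - 1) (by omega)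
      rwa [hkk] at this
    have h1 := hB k hke
    have h2 := hB (k - 1) (by omega)
    simp only [w, Prod.mk.injEq]
    rw [max_eq_left haadj.le, max_eq_right hadj.le]
    exact ⟨rfl, by omega⟩
  · intro hW k hke
    induction k with
    | zero => exact beta_zero hM hg
    | succ n ih =>
      have hW' := hW (n + 1) (by omega) hke
      have hadj : (m n).2 < (m (n + 1)).2 := hg.2.1 n (by omega)
      have hy : (w m (n + 1)).2 = (m n).2 + 1 := by
        rw [hW']
        simp
      simp only [w, Nat.add_sub_cancel] at hy
      rw [max_eq_right hadj.le] at hy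
      have hn := ih (by omega)
      push_cast
      omega

lemma rowLen_eq (hM : IsMonIdeal M) (hg : IsGenSeq M e m) {β j : ℕ}
    (hje : j ≤ e) (h1 : (m j).2 ≤ (β : ℤ))
    (h2 : j = e ∨ (β : ℤ) < (m (j + 1)).2) :
    rowLen M β = (m j).1.toNat := by
  have hset : {α : ℤ | 0 ≤ α ∧ ((α, (β : ℤ)) : Mon) ∉ M} = Set.Ico (0 : ℤ) (m j).1 := by
    ext α
    simp only [Set.mem_setOf_eq, Set.mem_Ico]
    constructor
    · rintro ⟨h0, hnm⟩
      refine ⟨h0, ?_⟩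
      by_contra hge
      push_neg at hge
      exact hnm (mem_up hM (hg.1 j hje).1 hge h1)
    · rintro ⟨h0, hlt⟩
      refine ⟨h0, fun hmem => ?_⟩
      obtain ⟨k, hk, d1, d2⟩ := exists_gen hM hg hmem
      simp only at d1 d2
      by_cases hkj : k ≤ j
      · have := alpha_gap hM hg hkj hje
        omega
      · push_neg at hkj
        rcases h2 with h | h
        · omega
        · have := beta_gap hg (k := j + 1) (l := k) hkj hk
          omega
  have hcard : rowLen M β = Nat.card (Set.Ico (0 : ℤ) (m j).1) := by
    rw [← hset]
    rfl
  rw [hcard]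
  simp [Nat.card_Ico]

lemma colLen_eq (hM : IsMonIdeal M) (hg : IsGenSeq M e m) {α j : ℕ}
    (hje : j ≤ e) (h1 : (m j).1 ≤ (α : ℤ))
    (h2 : j = 0 ∨ (α : ℤ) < (m (j - 1)).1) :
    colLen M α = (m j).2.toNat := by
  have hset : {β : ℤ | 0 ≤ β ∧ (((α : ℤ), β) : Mon) ∉ M} = Set.Ico (0 : ℤ) (m j).2 := by
    ext β
    simp only [Set.mem_setOf_eq, Set.mem_Ico]
    constructor
    · rintro ⟨h0, hnm⟩
      refine ⟨h0, ?_⟩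
      by_contra hge
      push_neg at hge
      exact hnm (mem_up hM (hg.1 j hje).1 h1 hge)
    · rintro ⟨h0, hlt⟩
      refine ⟨h0, fun hmem => ?_⟩
      obtain ⟨k, hk, d1, d2⟩ := exists_gen hM hg hmem
      simp only at d1 d2
      by_cases hkj : j ≤ k
      · have := beta_gap hg hkj hk
        omega
      · push_neg at hkj
        rcases h2 with h | h
        · omega
        · have := alpha_gap hM hg (k := k) (l := j - 1) (by omega) (by omega)
          omega
  have hcard : colLen M α = Nat.card (Set.Ico (0 : ℤ) (m j).2) := by
    rw [← hset]
    rfl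
  rw [hcard]
  simp [Nat.card_Ico]

lemma tminus_iff_row (hM : IsMonIdeal M) (hg : IsGenSeq M e m) :
    Tminus 1 1 M e m = ∅ ↔
      (∀ β : ℕ, 0 < rowLen M (β + 1) → rowLen M (β + 1) < rowLen M β) := by
  rw [tminus_iff_beta hM hg]
  constructor
  · intro hB β hpos
    have hrow : ∀ γ : ℕ, rowLen M γ = (m (min γ e)).1.toNat := by
      intro γ
      refine rowLen_eq hM hg (min_le_right _ _) ?_ ?_
      · rw [hB _ (min_le_right _ _)]
        omega
      · rcases le_or_gt e γ with h | h
        · left; omega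
        · right
          rw [hB (min γ e + 1) (by omega)]
          omega
    rw [hrow] at hpos
    rw [hrow, hrow]
    have hlt : β + 1 < e := by
      by_contra h
      push_neg at h
      have hm : min (β + 1) e = e := min_eq_right h
      rw [hm, alpha_e hM hg] at hpos
      simp at hpos
    have hm1 : min (β + 1) e = β + 1 := by omega
    have hm2 : min β e = β := by omega
    rw [hm1] at hpos ⊢
    rw [hm2]
    have := alpha_adj hM hg (k := β) (by omega)
    omega
  · intro hC
    by_contra hbad
    obtain ⟨i, hie, hbi, hbi1⟩ := exists_beta_bad hM hg hbad
    have hr1 : rowLen M i = (m i).1.toNat :=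
      rowLen_eq hM hg hie.le (le_of_eq hbi) (Or.inr (by omega))
    have hr2 : rowLen M (i + 1) = (m i).1.toNat :=
      rowLen_eq hM hg hie.le (by omega) (Or.inr (by omega))
    have hpos : 0 < rowLen M (i + 1) := by
      rw [hr2]
      have := alpha_gap hM hg (k := i) (l := e) hie.le le_rfl
      have h0 := alpha_e hM hg
      omega
    have := hC i hpos
    omega

lemma tplus_iff_col (hM : IsMonIdeal M) (hg : IsGenSeq M e m) :
    Tplus 1 1 M e m = ∅ ↔
      (∀ α : ℕ, 0 < colLen M (α + 1) → colLen M (α + 1) < colLen M α) := by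
  rw [tplus_iff_alpha hM hg]
  constructor
  · intro hB α hpos
    have hcol : ∀ γ : ℕ, colLen M γ = (m (e - min γ e)).2.toNat := by
      intro γ
      refine colLen_eq hM hg (by omega) ?_ ?_
      · rw [hB _ (by omega)]
        omega
      · rcases le_or_gt e γ with h | h
        · left; omega
        · right
          rw [hB (e - min γ e - 1) (by omega)]
          omega
    rw [hcol] at hpos
    rw [hcol, hcol]
    have hlt : α + 1 < e := by
      by_contra h
      push_neg at h
      have hm : e - min (α + 1) e = 0 := by omega
      rw [hm, beta_zero hM hg] at hpos
      simp at hpos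
    have hm1 : e - min (α + 1) e = e - (α + 1) := by omega
    have hm2 : e - min α e = e - α := by omega
    rw [hm1] at hpos ⊢
    rw [hm2]
    have hadj := hg.2.1 (e - (α + 1)) (by omega)
    have hstep : e - (α + 1) + 1 = e - α := by omega
    rw [hstep] at hadj
    have hnn := (gen_nonneg hg hM (k := e - (α + 1)) (by omega)).2
    omega
  · intro hC
    by_contra hbad
    obtain ⟨i, hie, hai1, hai⟩ := exists_alpha_bad hM hg hbad
    have hc1 : colLen M (e - (i + 1)) = (m (i + 1)).2.toNat := by
      refine colLen_eq hM hg hie ?_ (Or.inr ?_)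
      · rw [hai1]
      · have : i + 1 - 1 = i := by omega
        rw [this]
        omega
    have hc2 : colLen M (e - (i + 1) + 1) = (m (i + 1)).2.toNat := by
      refine colLen_eq hM hg hie ?_ (Or.inr ?_)
      · rw [hai1]; omega
      · have : i + 1 - 1 = i := by omega
        rw [this]
        omega
    have hpos : 0 < colLen M (e - (i + 1) + 1) := by
      rw [hc2]
      have := beta_ge hM hg (k := i + 1) hie
      omega
    have := hC (e - (i + 1)) hpos
    omega

end Aux

end MonId

/-- In the standard grading, with minimal generators
`m_k = x^{α_k} y^{β_k}`: `T⁻(M) = ∅` iff `β_k = k` for all `0 ≤ k ≤ e`,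
iff the row lengths of the Young diagram of `M` are strictly decreasing,
iff `w_k = y·m_{k-1}` for `1 ≤ k ≤ e`; dually, `T⁺(M) = ∅` iff
`α_k = e - k` for all `0 ≤ k ≤ e`, iff the column lengths of the Young
diagram of `M` are strictly decreasing. -/
theorem lexLeast_lexMost_characterizations
    (M : Set Mon) (hM : IsMonIdeal M) (e : ℕ) (m : ℕ → Mon)
    (hg : IsGenSeq M e m) :
    ((Tminus 1 1 M e m = ∅) ↔ (∀ k ≤ e, (m k).2 = (k : ℤ))) ∧
    ((Tminus 1 1 M e m = ∅) ↔
      (∀ β : ℕ, 0 < rowLen M (β + 1) → rowLen M (β + 1) < rowLen M β)) ∧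
    ((Tminus 1 1 M e m = ∅) ↔
      (∀ k : ℕ, 1 ≤ k → k ≤ e → w m k = ((m (k - 1)).1, (m (k - 1)).2 + 1))) ∧
    ((Tplus 1 1 M e m = ∅) ↔ (∀ k ≤ e, (m k).1 = ((e - k : ℕ) : ℤ))) ∧
    ((Tplus 1 1 M e m = ∅) ↔
      (∀ α : ℕ, 0 < colLen M (α + 1) → colLen M (α + 1) < colLen M α)) :=
  ⟨tminus_iff_beta hM hg, tminus_iff_row hM hg, tminus_iff_w hM hg,
    tplus_iff_alpha hM hg, tplus_iff_col hM hg⟩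
end
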